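/- Let the fundamental graph data with a set S be given, let Q : V* → ℝ be a potential, and let α, α° : A* → ℝ be two 1-forms both vanishing outside S ∪ S̄. Set C = 2 · max_{u∈V*} Σ_{e ∈ S∪S̄, o(e)=u} |sin((α°(e) − α(e))/2)|. Then for every n ∈ {1,…,ν} the lengths of the n-th spectral bands satisfy | |σ_n(H_{α°})| − |σ_n(H_α)| | ≤ 2C, where |σ_n(H_α)| = sup_θ λ_{α,n}(θ) − inf_θ λ_{α,n}(θ). -/

import Mathlib

open scoped BigOperators
open Matrix Polynomial

noncomputable section

/-- Phase `α(e) + ⟨τ(e), θ⟩` of an edge. -/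
def edgePhase {E : Type*} {d : ℕ} (α : E → ℝ) (τ : E → Fin d → ℤ)
    (θ : Fin d → ℝ) (e : E) : ℝ :=
  α e + ∑ j, (τ e j : ℝ) * θ j

/-- Degree of a vertex: the number of oriented edges starting at it. -/
def vertexDeg {E : Type*} [Fintype E] {ν : ℕ} (o : E → Fin ν) (v : Fin ν) : ℕ :=
  (Finset.univ.filter fun e => o e = v).card

/-- The fiber magnetic Laplacian `Δ_α(θ)` as a `ν × ν` complex matrix. -/
def fiberLap {E : Type*} [Fintype E] {d ν : ℕ} (o t : E → Fin ν)
    (τ : E → Fin d → ℤ) (α : E → ℝ) (θ : Fin d → ℝ) : Matrix (Fin ν) (Fin ν) ℂ :=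
  fun v u => (vertexDeg o v : ℂ) * (if v = u then 1 else 0)
    - ∑ e ∈ Finset.univ.filter (fun e => o e = v ∧ t e = u),
        Complex.exp (Complex.I * (edgePhase α τ θ e : ℝ))

/-- The fiber magnetic Schrödinger operator `H_α(θ) = Δ_α(θ) + diag Q`. -/
def fiberSch {E : Type*} [Fintype E] {d ν : ℕ} (o t : E → Fin ν)
    (τ : E → Fin d → ℤ) (α : E → ℝ) (Q : Fin ν → ℝ) (θ : Fin d → ℝ) :
    Matrix (Fin ν) (Fin ν) ℂ :=
  fiberLap o t τ α θ + Matrix.diagonal (fun v => (Q v : ℂ))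


lemma charpoly_unitary_conj {n : Type*} [Fintype n] [DecidableEq n]
    (U A : Matrix n n ℂ) (h1 : U * star U = 1) (h2 : star U * U = 1) :
    (U * A * star U).charpoly = A.charpoly := by
  unfold Matrix.charpoly
  have key : charmatrix (U * A * star U)
      = (C : ℂ →+* ℂ[X]).mapMatrix U * charmatrix A * (C : ℂ →+* ℂ[X]).mapMatrix (star U) := by
    unfold charmatrix
    rw [mul_sub, sub_mul]
    congr 1
    · have hc : Commute (Matrix.scalar n (X : ℂ[X])) ((C : ℂ →+* ℂ[X]).mapMatrix (star U)) :=
        Matrix.scalar_commute _ (fun r => Commute.all _ _) _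
      symm
      rw [mul_assoc, hc.eq, ← mul_assoc, ← _root_.map_mul, h1, _root_.map_one, one_mul]
    · rw [← _root_.map_mul, ← _root_.map_mul]
  rw [key, det_mul, det_mul, mul_comm, ← mul_assoc, ← det_mul,
    ← _root_.map_mul ((C : ℂ →+* ℂ[X]).mapMatrix) (star U) U, h2, _root_.map_one, det_one, one_mul]

lemma isHermitian_charpoly_eq {n : Type*} [Fintype n] [DecidableEq n]
    {A : Matrix n n ℂ} (hA : A.IsHermitian) :
    A.charpoly = ∏ i, (X - C ((hA.eigenvalues i : ℝ) : ℂ)) := by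
  have hU1 : (hA.eigenvectorUnitary : Matrix n n ℂ) * star (hA.eigenvectorUnitary : Matrix n n ℂ) = 1 :=
    (Matrix.mem_unitaryGroup_iff).mp hA.eigenvectorUnitary.2
  have hU2 : star (hA.eigenvectorUnitary : Matrix n n ℂ) * (hA.eigenvectorUnitary : Matrix n n ℂ) = 1 :=
    (Matrix.mem_unitaryGroup_iff').mp hA.eigenvectorUnitary.2
  have h := congrArg Matrix.charpoly hA.spectral_theorem
  rw [h, Unitary.conjStarAlgAut_apply, charpoly_unitary_conj _ _ hU1 hU2]
  have hdiag : charmatrix (Matrix.diagonal (RCLike.ofReal ∘ hA.eigenvalues) : Matrix n n ℂ)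
      = Matrix.diagonal (fun i => (X : ℂ[X]) - C ((hA.eigenvalues i : ℝ) : ℂ)) := by
    ext i j
    by_cases hij : i = j
    · subst hij; simp
    · rw [charmatrix_apply_ne _ _ _ hij, Matrix.diagonal_apply_ne _ hij,
        Matrix.diagonal_apply_ne _ hij, map_zero, neg_zero]
  unfold Matrix.charpoly
  rw [hdiag, det_diagonal]

lemma roots_eq_of_charpoly {ν : ℕ} {M : Matrix (Fin ν) (Fin ν) ℂ} {f : Fin ν → ℝ}
    (h : M.charpoly = ∏ i, (X - C ((f i : ℝ) : ℂ))) :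
    M.charpoly.roots = Finset.univ.val.map (fun i => ((f i : ℝ) : ℂ)) := by
  rw [h, Finset.prod_eq_multiset_prod]
  rw [show Finset.univ.val.map (fun i => (X : ℂ[X]) - C ((f i : ℝ) : ℂ))
      = (Finset.univ.val.map (fun i => ((f i : ℝ) : ℂ))).map (fun a => (X : ℂ[X]) - C a) by
    rw [Multiset.map_map]; rfl]
  exact roots_multiset_prod_X_sub_C _

lemma count_eq_of_multiset_eq {ν : ℕ} {f g : Fin ν → ℝ}
    (h : Finset.univ.val.map (fun i => ((f i : ℝ) : ℂ))
       = Finset.univ.val.map (fun i => ((g i : ℝ) : ℂ))) (μ : ℝ) :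
    (Finset.univ.filter (fun i : Fin ν => f i ≤ μ)).card
      = (Finset.univ.filter (fun i : Fin ν => g i ≤ μ)).card := by
  have hmap : Finset.univ.val.map f = Finset.univ.val.map g := by
    apply Multiset.map_injective (f := (fun x : ℝ => (x : ℂ))) Complex.ofReal_injective
    rw [Multiset.map_map, Multiset.map_map]; exact h
  have h1 : ∀ (f : Fin ν → ℝ), (Finset.univ.filter (fun i : Fin ν => f i ≤ μ)).card
      = Multiset.countP (fun x : ℝ => x ≤ μ) (Finset.univ.val.map f) := by
    intro f
    rw [Multiset.countP_map]
    rfl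
  rw [h1, h1, hmap]

lemma mono_le_iff_count {ν : ℕ} {f : Fin ν → ℝ} (hf : Monotone f) (n : Fin ν) (μ : ℝ) :
    f n ≤ μ ↔ (n : ℕ) + 1 ≤ (Finset.univ.filter (fun i : Fin ν => f i ≤ μ)).card := by
  constructor
  · intro h
    have hsub : Finset.Iic n ⊆ Finset.univ.filter (fun i : Fin ν => f i ≤ μ) := by
      intro i hi
      simp only [Finset.mem_Iic] at hi
      simp only [Finset.mem_filter, Finset.mem_univ, true_and]
      exact le_trans (hf hi) h
    have := Finset.card_le_card hsub
    rwa [Fin.card_Iic] at this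
  · intro h
    by_contra hc
    push_neg at hc
    have hsub : Finset.univ.filter (fun i : Fin ν => f i ≤ μ) ⊆ Finset.Iio n := by
      intro i hi
      simp only [Finset.mem_filter, Finset.mem_univ, true_and] at hi
      simp only [Finset.mem_Iio]
      by_contra hni
      push_neg at hni
      exact absurd (le_trans (hf hni) hi) (not_le.mpr hc)
    have := Finset.card_le_card hsub
    rw [Fin.card_Iio] at this
    omega

variable {ν : ℕ}

local notation "⟪" x ", " y "⟫" => @inner ℂ _ _ x y

lemma inner_eq_zero_off_span (v : OrthonormalBasis (Fin ν) ℂ (EuclideanSpace ℂ (Fin ν)))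
    (s : Finset (Fin ν)) {x : EuclideanSpace ℂ (Fin ν)}
    (hx : x ∈ Submodule.span ℂ (⇑v '' ↑s)) {j : Fin ν} (hj : j ∉ s) :
    ⟪v j, x⟫ = 0 := by
  induction hx using Submodule.span_induction with
  | mem y hy =>
    obtain ⟨i, hi, rfl⟩ := hy
    exact v.orthonormal.2 (fun h : j = i => hj (h ▸ hi))
  | zero => simp
  | add y z _ _ hy hz => rw [inner_add_right, hy, hz, add_zero]
  | smul c y _ hy => rw [inner_smul_right, hy, mul_zero]

lemma toEuclideanLin_eigenvectorBasis {M : Matrix (Fin ν) (Fin ν) ℂ} (hM : M.IsHermitian)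
    (i : Fin ν) :
    Matrix.toEuclideanLin M (hM.eigenvectorBasis i)
      = (hM.eigenvalues i : ℂ) • hM.eigenvectorBasis i := by
  apply PiLp.ext
  intro j
  have h := congrFun (hM.mulVec_eigenvectorBasis i) j
  simpa [Matrix.toEuclideanLin_apply] using h

lemma norm_sq_eq_sum_span (v : OrthonormalBasis (Fin ν) ℂ (EuclideanSpace ℂ (Fin ν)))
    (x : EuclideanSpace ℂ (Fin ν)) :
    (‖x‖ ^ 2 : ℝ) = ∑ i, ‖⟪v i, x⟫‖ ^ 2 := by
  have h := v.sum_inner_mul_inner x x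
  have h2 : ∀ i : Fin ν, ⟪x, v i⟫ * ⟪v i, x⟫ = ((‖⟪v i, x⟫‖ ^ 2 : ℝ) : ℂ) := by
    intro i
    rw [← inner_conj_symm x (v i), RCLike.conj_mul]
    norm_cast
  have h3 : (inner ℂ x x : ℂ) = ((‖x‖ ^ 2 : ℝ) : ℂ) := by
    rw [inner_self_eq_norm_sq_to_K]; norm_cast
  rw [Finset.sum_congr rfl (fun i _ => h2 i), h3] at h
  exact_mod_cast h.symm

lemma rayleigh_eq_sum {M : Matrix (Fin ν) (Fin ν) ℂ} (hM : M.IsHermitian)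
    (x : EuclideanSpace ℂ (Fin ν)) :
    ((inner ℂ x (Matrix.toEuclideanLin M x) : ℂ)).re
      = ∑ i, hM.eigenvalues i * ‖⟪hM.eigenvectorBasis i, x⟫‖ ^ 2 := by
  set b := hM.eigenvectorBasis with hb
  have h := b.sum_inner_mul_inner x (Matrix.toEuclideanLin M x)
  have hsym : ∀ i, ⟪b i, Matrix.toEuclideanLin M x⟫ = (hM.eigenvalues i : ℂ) * ⟪b i, x⟫ := by
    intro i
    have hs : LinearMap.IsSymmetric (Matrix.toEuclideanLin M) :=
      (Matrix.isHermitian_iff_isSymmetric).mp hM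
    rw [← hs (b i) x, toEuclideanLin_eigenvectorBasis hM i, inner_smul_left,
      Complex.conj_ofReal]
  have h2 : ∀ i : Fin ν, ⟪x, b i⟫ * ⟪b i, Matrix.toEuclideanLin M x⟫
      = ((hM.eigenvalues i * ‖⟪b i, x⟫‖ ^ 2 : ℝ) : ℂ) := by
    intro i
    rw [hsym i, ← inner_conj_symm x (b i), mul_comm ((starRingEnd ℂ) _) _, mul_assoc,
      RCLike.mul_conj]
    norm_cast
    simp [RCLike.ofReal_alg]
  rw [Finset.sum_congr rfl (fun i _ => h2 i), ← Complex.ofReal_sum] at h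
  rw [← h, Complex.ofReal_re]

lemma rayleigh_le_span {M : Matrix (Fin ν) (Fin ν) ℂ} (hM : M.IsHermitian)
    (s : Finset (Fin ν)) (μ : ℝ) (hs : ∀ i ∈ s, hM.eigenvalues i ≤ μ)
    {x : EuclideanSpace ℂ (Fin ν)}
    (hx : x ∈ Submodule.span ℂ (⇑hM.eigenvectorBasis '' ↑s)) :
    ((inner ℂ x (Matrix.toEuclideanLin M x) : ℂ)).re ≤ μ * ‖x‖ ^ 2 := by
  rw [rayleigh_eq_sum hM x, norm_sq_eq_sum_span hM.eigenvectorBasis x, Finset.mul_sum]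
  have hz : ∀ i ∉ s, ⟪hM.eigenvectorBasis i, x⟫ = 0 :=
    fun i hi => inner_eq_zero_off_span hM.eigenvectorBasis s hx hi
  rw [← Finset.sum_subset (Finset.subset_univ s)
    (fun i _ hi => by rw [hz i hi]; simp),
    ← Finset.sum_subset (Finset.subset_univ s)
    (fun i _ hi => by rw [hz i hi]; simp)]
  exact Finset.sum_le_sum fun i hi =>
    mul_le_mul_of_nonneg_right (hs i hi) (by positivity)

lemma lt_rayleigh_span {M : Matrix (Fin ν) (Fin ν) ℂ} (hM : M.IsHermitian)
    (s : Finset (Fin ν)) (μ : ℝ) (hs : ∀ i ∈ s, μ < hM.eigenvalues i)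
    {x : EuclideanSpace ℂ (Fin ν)}
    (hx : x ∈ Submodule.span ℂ (⇑hM.eigenvectorBasis '' ↑s)) (hx0 : x ≠ 0) :
    μ * ‖x‖ ^ 2 < ((inner ℂ x (Matrix.toEuclideanLin M x) : ℂ)).re := by
  rw [rayleigh_eq_sum hM x, norm_sq_eq_sum_span hM.eigenvectorBasis x, Finset.mul_sum]
  have hz : ∀ i ∉ s, ⟪hM.eigenvectorBasis i, x⟫ = 0 :=
    fun i hi => inner_eq_zero_off_span hM.eigenvectorBasis s hx hi
  rw [← Finset.sum_subset (Finset.subset_univ s)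
    (fun i _ hi => by rw [hz i hi]; simp),
    ← Finset.sum_subset (Finset.subset_univ s)
    (fun i _ hi => by rw [hz i hi]; simp)]
  have hxs : ∃ i ∈ s, ⟪hM.eigenvectorBasis i, x⟫ ≠ 0 := by
    by_contra hcon
    push_neg at hcon
    apply hx0
    have : (‖x‖ ^ 2 : ℝ) = 0 := by
      rw [norm_sq_eq_sum_span hM.eigenvectorBasis x]
      rw [← Finset.sum_subset (Finset.subset_univ s)
        (fun i _ hi => by rw [hz i hi]; simp)]
      exact Finset.sum_eq_zero fun i hi => by rw [hcon i hi]; simp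
    have := pow_eq_zero_iff (n := 2) (by norm_num) |>.mp this
    exact norm_eq_zero.mp this
  obtain ⟨i₀, hi₀s, hi₀⟩ := hxs
  apply Finset.sum_lt_sum
  · exact fun i hi => mul_le_mul_of_nonneg_right (le_of_lt (hs i hi)) (by positivity)
  · exact ⟨i₀, hi₀s, by
      have : (0:ℝ) < ‖⟪hM.eigenvectorBasis i₀, x⟫‖ ^ 2 :=
        pow_pos (norm_pos_iff.mpr hi₀) 2
      exact (mul_lt_mul_of_pos_right (hs i₀ hi₀s) this)⟩

lemma finrank_span_orthonormal (v : OrthonormalBasis (Fin ν) ℂ (EuclideanSpace ℂ (Fin ν)))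
    (s : Finset (Fin ν)) :
    Module.finrank ℂ (Submodule.span ℂ (⇑v '' ↑s)) = s.card := by
  rw [Set.image_eq_range]
  have hli : LinearIndependent ℂ (fun i : ↑(↑s : Set (Fin ν)) => v ↑i) :=
    (v.orthonormal.comp _ Subtype.val_injective).linearIndependent
  rw [finrank_span_eq_card hli]
  simp

lemma exists_nonzero_mem_inf {V W : Submodule ℂ (EuclideanSpace ℂ (Fin ν))}
    (h : ν < Module.finrank ℂ V + Module.finrank ℂ W) : ∃ x, x ∈ V ⊓ W ∧ x ≠ 0 := by
  have hsup : Module.finrank ℂ (V ⊔ W : Submodule ℂ (EuclideanSpace ℂ (Fin ν))) ≤ ν := by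
    have := Submodule.finrank_le (V ⊔ W)
    rwa [finrank_euclideanSpace, Fintype.card_fin] at this
  have heq := Submodule.finrank_sup_add_finrank_inf_eq V W
  have hpos : 0 < Module.finrank ℂ (V ⊓ W : Submodule ℂ (EuclideanSpace ℂ (Fin ν))) := by omega
  have hne : (V ⊓ W : Submodule ℂ (EuclideanSpace ℂ (Fin ν))) ≠ ⊥ := by
    intro hbot
    rw [hbot, finrank_bot] at hpos
    omega
  exact Submodule.exists_mem_ne_zero_of_ne_bot hne

lemma weyl_one_sided {ν : ℕ} {A B : Matrix (Fin ν) (Fin ν) ℂ}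
    (hA : A.IsHermitian) (hB : B.IsHermitian)
    {lamA lamB : Fin ν → ℝ} (hmA : Monotone lamA) (hmB : Monotone lamB)
    (hrA : A.charpoly = ∏ i, (X - C ((lamA i : ℝ) : ℂ)))
    (hrB : B.charpoly = ∏ i, (X - C ((lamB i : ℝ) : ℂ)))
    {Cb : ℝ}
    (hC : ∀ x : EuclideanSpace ℂ (Fin ν),
      ((inner ℂ x (Matrix.toEuclideanLin (B - A) x) : ℂ)).re ≤ Cb * ‖x‖ ^ 2)
    (n : Fin ν) : lamB n ≤ lamA n + Cb := by
  -- counting identities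
  have hcntA : ∀ μ : ℝ, (Finset.univ.filter (fun i : Fin ν => lamA i ≤ μ)).card
      = (Finset.univ.filter (fun i : Fin ν => hA.eigenvalues i ≤ μ)).card := by
    intro μ
    apply count_eq_of_multiset_eq
    rw [← roots_eq_of_charpoly hrA, ← roots_eq_of_charpoly (isHermitian_charpoly_eq hA)]
  have hcntB : ∀ μ : ℝ, (Finset.univ.filter (fun i : Fin ν => lamB i ≤ μ)).card
      = (Finset.univ.filter (fun i : Fin ν => hB.eigenvalues i ≤ μ)).card := by
    intro μ
    apply count_eq_of_multiset_eq
    rw [← roots_eq_of_charpoly hrB, ← roots_eq_of_charpoly (isHermitian_charpoly_eq hB)]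
  set μ := lamA n with hμ
  by_contra hcon
  push_neg at hcon
  -- the two eigenvector index sets
  set sA : Finset (Fin ν) := Finset.univ.filter (fun i => hA.eigenvalues i ≤ μ) with hsA
  set sB : Finset (Fin ν) := Finset.univ.filter (fun i => ¬ hB.eigenvalues i ≤ μ + Cb) with hsB
  have hcardA : (n : ℕ) + 1 ≤ sA.card := by
    rw [hsA, ← hcntA]
    exact (mono_le_iff_count hmA n μ).mp le_rfl
  have hcardB : ν - (n : ℕ) ≤ sB.card := by
    have h1 : ¬ ((n : ℕ) + 1 ≤ (Finset.univ.filter (fun i : Fin ν => lamB i ≤ μ + Cb)).card) :=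
      fun h => absurd ((mono_le_iff_count hmB n (μ + Cb)).mpr h) (not_le.mpr hcon)
    push_neg at h1
    have h2 : sB.card = ν - (Finset.univ.filter
        (fun i : Fin ν => hB.eigenvalues i ≤ μ + Cb)).card := by
      rw [hsB, Finset.filter_not, Finset.card_sdiff_of_subset (Finset.filter_subset _ _),
        Finset.card_univ, Fintype.card_fin]
    have h3 := Finset.card_filter_le (Finset.univ : Finset (Fin ν))
      (fun i : Fin ν => hB.eigenvalues i ≤ μ + Cb)
    rw [Finset.card_univ, Fintype.card_fin] at h3
    have := hcntB (μ + Cb)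
    omega
  set V := Submodule.span ℂ (⇑hA.eigenvectorBasis '' ↑sA) with hV
  set W := Submodule.span ℂ (⇑hB.eigenvectorBasis '' ↑sB) with hW
  have hdim : ν < Module.finrank ℂ V + Module.finrank ℂ W := by
    rw [hV, hW, finrank_span_orthonormal, finrank_span_orthonormal]
    have hn : (n : ℕ) < ν := n.isLt
    omega
  obtain ⟨x, hxVW, hx0⟩ := exists_nonzero_mem_inf hdim
  have hxV : x ∈ V := hxVW.1
  have hxW : x ∈ W := hxVW.2
  have h1 : ((inner ℂ x (Matrix.toEuclideanLin A x) : ℂ)).re ≤ μ * ‖x‖ ^ 2 :=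
    rayleigh_le_span hA sA μ (fun i hi => (Finset.mem_filter.mp hi).2) hxV
  have h2 : (μ + Cb) * ‖x‖ ^ 2 < ((inner ℂ x (Matrix.toEuclideanLin B x) : ℂ)).re :=
    lt_rayleigh_span hB sB (μ + Cb)
      (fun i hi => not_le.mp (Finset.mem_filter.mp hi).2) hxW hx0
  have h3 : ((inner ℂ x (Matrix.toEuclideanLin B x) : ℂ)).re
      = ((inner ℂ x (Matrix.toEuclideanLin A x) : ℂ)).re
        + ((inner ℂ x (Matrix.toEuclideanLin (B - A) x) : ℂ)).re := by
    have : Matrix.toEuclideanLin (B - A) x = Matrix.toEuclideanLin B x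
        - Matrix.toEuclideanLin A x := by
      rw [map_sub]
      rfl
    rw [this, inner_sub_right, Complex.sub_re]
    ring
  have h4 := hC x
  nlinarith [h2, h1, h3, h4]

lemma weyl_abs {ν : ℕ} {A B : Matrix (Fin ν) (Fin ν) ℂ}
    (hA : A.IsHermitian) (hB : B.IsHermitian)
    {lamA lamB : Fin ν → ℝ} (hmA : Monotone lamA) (hmB : Monotone lamB)
    (hrA : A.charpoly = ∏ i, (X - C ((lamA i : ℝ) : ℂ)))
    (hrB : B.charpoly = ∏ i, (X - C ((lamB i : ℝ) : ℂ)))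
    {Cb : ℝ}
    (hC : ∀ x : EuclideanSpace ℂ (Fin ν),
      |((inner ℂ x (Matrix.toEuclideanLin (B - A) x) : ℂ)).re| ≤ Cb * ‖x‖ ^ 2)
    (n : Fin ν) : |lamB n - lamA n| ≤ Cb := by
  rw [abs_sub_le_iff]
  constructor
  · have := weyl_one_sided hA hB hmA hmB hrA hrB
      (fun x => (abs_le.mp (hC x)).2) n
    linarith
  · have hC' : ∀ x : EuclideanSpace ℂ (Fin ν),
        ((inner ℂ x (Matrix.toEuclideanLin (A - B) x) : ℂ)).re ≤ Cb * ‖x‖ ^ 2 := by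
      intro x
      have he : Matrix.toEuclideanLin (A - B) x = -(Matrix.toEuclideanLin (B - A) x) := by
        rw [show A - B = -(B - A) from (neg_sub B A).symm, map_neg]
        rfl
      rw [he, inner_neg_right, Complex.neg_re]
      have := abs_le.mp (hC x)
      linarith [this.1]
    have := weyl_one_sided hB hA hmB hmA hrB hrA hC' n
    linarith

lemma norm_exp_sub_exp (a b : ℝ) :
    ‖Complex.exp (Complex.I * (a : ℝ)) - Complex.exp (Complex.I * (b : ℝ))‖
      = 2 * |Real.sin ((a - b) / 2)| := by
  have hfac : Complex.exp (Complex.I * (a : ℝ)) - Complex.exp (Complex.I * (b : ℝ))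
      = Complex.exp (Complex.I * (b : ℝ)) * (Complex.exp (Complex.I * ((a - b : ℝ) : ℂ)) - 1) := by
    rw [mul_sub, mul_one, ← Complex.exp_add]
    push_cast
    ring_nf
  rw [hfac, norm_mul]
  have h1 : ‖Complex.exp (Complex.I * (b : ℝ))‖ = 1 := by
    rw [mul_comm, Complex.norm_exp_ofReal_mul_I]
  rw [h1, one_mul]
  have h2 : Complex.exp (Complex.I * ((a - b : ℝ) : ℂ))
      = ((Real.cos (a - b) : ℝ) : ℂ) + ((Real.sin (a - b) : ℝ) : ℂ) * Complex.I := by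
    rw [mul_comm, Complex.exp_mul_I, Complex.ofReal_cos, Complex.ofReal_sin]
  rw [h2]
  have h3 : ((Real.cos (a - b) : ℝ) : ℂ) + ((Real.sin (a - b) : ℝ) : ℂ) * Complex.I - 1
      = ((Real.cos (a - b) - 1 : ℝ) : ℂ) + ((Real.sin (a - b) : ℝ) : ℂ) * Complex.I := by
    push_cast; ring
  rw [h3]
  rw [Complex.norm_def, Complex.normSq_add_mul_I]
  have h4 : (Real.cos (a - b) - 1) ^ 2 + Real.sin (a - b) ^ 2
      = (2 * |Real.sin ((a - b) / 2)|) ^ 2 := by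
    have h5 : Real.sin ((a - b) / 2) ^ 2 = 1 / 2 - Real.cos (a - b) / 2 := by
      have h := Real.sin_sq_eq_half_sub ((a - b) / 2)
      rwa [show 2 * ((a - b) / 2) = a - b by ring] at h
    have h6 := Real.sin_sq_add_cos_sq (a - b)
    rw [mul_pow, sq_abs]
    nlinarith
  rw [h4, Real.sqrt_sq (by positivity)]

section Graph
variable {E : Type*} [Fintype E] [DecidableEq E] {d ν : ℕ}

lemma edgePhase_inv (o t : E → Fin ν) (inv : E → E)
    (τ : E → Fin d → ℤ) (hτ : ∀ e, τ (inv e) = - τ e)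
    (α : E → ℝ) (hα : ∀ e, α (inv e) = - α e) (θ : Fin d → ℝ) (e : E) :
    edgePhase α τ θ (inv e) = - edgePhase α τ θ e := by
  unfold edgePhase
  rw [hα, hτ]
  rw [neg_add, ← Finset.sum_neg_distrib]
  congr 1
  apply Finset.sum_congr rfl
  intro j _
  rw [Pi.neg_apply]
  push_cast
  ring

lemma sum_exp_conj (o t : E → Fin ν) (inv : E → E) (hinv : ∀ e, inv (inv e) = e)
    (ho : ∀ e, o (inv e) = t e) (ht : ∀ e, t (inv e) = o e)
    (φ : E → ℝ) (hφ : ∀ e, φ (inv e) = - φ e) (v u : Fin ν) :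
    (starRingEnd ℂ) (∑ e ∈ Finset.univ.filter (fun e => o e = u ∧ t e = v),
        Complex.exp (Complex.I * (φ e : ℝ)))
      = ∑ e ∈ Finset.univ.filter (fun e => o e = v ∧ t e = u),
          Complex.exp (Complex.I * (φ e : ℝ)) := by
  rw [map_sum]
  refine Finset.sum_bij' (fun e _ => inv e) (fun e _ => inv e) ?_ ?_ ?_ ?_ ?_
  · intro e he
    simp only [Finset.mem_filter, Finset.mem_univ, true_and] at he ⊢
    rw [ho, ht, he.1, he.2]
    exact ⟨rfl, rfl⟩
  · intro e he
    simp only [Finset.mem_filter, Finset.mem_univ, true_and] at he ⊢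
    rw [ho, ht, he.1, he.2]
    exact ⟨rfl, rfl⟩
  · intro e _; exact hinv e
  · intro e _; exact hinv e
  · intro e _
    rw [← Complex.exp_conj]
    congr 1
    rw [hφ e]
    rw [_root_.map_mul, Complex.conj_I, Complex.conj_ofReal]
    push_cast
    ring

lemma fiberSch_isHermitian (o t : E → Fin ν) (inv : E → E) (hinv : ∀ e, inv (inv e) = e)
    (ho : ∀ e, o (inv e) = t e) (ht : ∀ e, t (inv e) = o e)
    (τ : E → Fin d → ℤ) (hτ : ∀ e, τ (inv e) = - τ e)
    (α : E → ℝ) (hα : ∀ e, α (inv e) = - α e) (Q : Fin ν → ℝ) (θ : Fin d → ℝ) :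
    (fiberSch o t τ α Q θ).IsHermitian := by
  rw [Matrix.IsHermitian]
  ext v u
  rw [Matrix.conjTranspose_apply]
  unfold fiberSch
  simp only [Matrix.add_apply, Matrix.diagonal_apply]; unfold fiberLap
  rw [star_add, star_sub]
  congr 1
  · congr 1
    · have hstar : (star ((vertexDeg o u : ℂ) * (if u = v then 1 else 0)))
          = (vertexDeg o u : ℂ) * (if u = v then 1 else 0) := by
        by_cases h : u = v
        · subst h; simp [star_natCast]
        · simp [h, star_natCast]
      rw [hstar]
      by_cases h : v = u
      · subst h; rfl
      · rw [if_neg h, if_neg (fun hh => h hh.symm)]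
        simp
    · exact sum_exp_conj o t inv hinv ho ht (edgePhase α τ θ)
        (edgePhase_inv o t inv τ hτ α hα θ) v u
  · by_cases h : v = u
    · subst h; simp
    · rw [if_neg (fun hh => h hh.symm), if_neg h]
      simp

lemma sum_over_pairs (o t : E → Fin ν) (g : E → ℝ) :
    ∑ v : Fin ν, ∑ u : Fin ν, ∑ e ∈ Finset.univ.filter (fun e => o e = v ∧ t e = u), g e
      = ∑ e, g e := by
  have h1 : ∀ v : Fin ν,
      ∑ u : Fin ν, ∑ e ∈ Finset.univ.filter (fun e => o e = v ∧ t e = u), g e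
        = ∑ e ∈ Finset.univ.filter (fun e => o e = v), g e := by
    intro v
    have h2 : ∀ u : Fin ν, Finset.univ.filter (fun e => o e = v ∧ t e = u)
        = (Finset.univ.filter (fun e => o e = v)).filter (fun e => t e = u) := by
      intro u
      rw [Finset.filter_filter]
    rw [Finset.sum_congr rfl (fun u _ => by rw [h2 u])]
    exact Finset.sum_fiberwise_of_maps_to (fun e _ => Finset.mem_univ _) g
  rw [Finset.sum_congr rfl (fun v _ => h1 v)]
  exact Finset.sum_fiberwise_of_maps_to (fun e _ => Finset.mem_univ _) g

end Graph

section Ray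
variable {E : Type*} [Fintype E] [DecidableEq E] {d ν : ℕ}

lemma rayleigh_diff_bound (o t : E → Fin ν) (τ : E → Fin d → ℤ)
    (α β : E → ℝ) (Q : Fin ν → ℝ) (θ θ' : Fin d → ℝ)
    (inv : E → E) (hinv : ∀ e, inv (inv e) = e) (ho : ∀ e, o (inv e) = t e)
    (w : E → ℝ)
    (hw : ∀ e, ‖Complex.exp (Complex.I * (edgePhase α τ θ e : ℝ))
        - Complex.exp (Complex.I * (edgePhase β τ θ' e : ℝ))‖ ≤ w e)
    (hw0 : ∀ e, 0 ≤ w e) (hwsym : ∀ e, w (inv e) = w e)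
    (R : ℝ) (hR : ∀ v, ∑ e ∈ Finset.univ.filter (fun e => o e = v), w e ≤ R)
    (x : EuclideanSpace ℂ (Fin ν)) :
    |((inner ℂ x (Matrix.toEuclideanLin
        (fiberSch o t τ β Q θ' - fiberSch o t τ α Q θ) x) : ℂ)).re|
      ≤ R * ‖x‖ ^ 2 := by
  set D := fiberSch o t τ β Q θ' - fiberSch o t τ α Q θ with hD
  have hDentry : ∀ v u, D v u = ∑ e ∈ Finset.univ.filter (fun e => o e = v ∧ t e = u),
      (Complex.exp (Complex.I * (edgePhase α τ θ e : ℝ))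
        - Complex.exp (Complex.I * (edgePhase β τ θ' e : ℝ))) := by
    intro v u
    rw [hD]
    simp only [Matrix.sub_apply]
    unfold fiberSch
    simp only [Matrix.add_apply]; unfold fiberLap
    rw [Finset.sum_sub_distrib]
    ring
  have hDnorm : ∀ v u, ‖D v u‖ ≤ ∑ e ∈ Finset.univ.filter (fun e => o e = v ∧ t e = u), w e := by
    intro v u
    rw [hDentry]
    refine le_trans (norm_sum_le _ _) (Finset.sum_le_sum fun e _ => hw e)
  -- inner product as explicit sum
  have hinner : (inner ℂ x (Matrix.toEuclideanLin D x) : ℂ)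
      = ∑ v, (starRingEnd ℂ) (x v) * (D.mulVec (fun u => x u) v) := by
    rw [Matrix.toEuclideanLin_apply, PiLp.inner_apply]
    apply Finset.sum_congr rfl
    intro v _
    rw [RCLike.inner_apply]
    exact mul_comm _ _
  have hxnormsq : ∑ v, ‖x v‖ ^ 2 = ‖x‖ ^ 2 := by
    rw [EuclideanSpace.norm_eq, Real.sq_sqrt]
    positivity
  calc |((inner ℂ x (Matrix.toEuclideanLin D x) : ℂ)).re|
      ≤ ‖(inner ℂ x (Matrix.toEuclideanLin D x) : ℂ)‖ := Complex.abs_re_le_norm _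
    _ = ‖∑ v, (starRingEnd ℂ) (x v) * (D.mulVec (fun u => x u) v)‖ := by rw [hinner]
    _ ≤ ∑ v, ‖(starRingEnd ℂ) (x v) * (D.mulVec (fun u => x u) v)‖ := norm_sum_le _ _
    _ = ∑ v, ‖x v‖ * ‖D.mulVec (fun u => x u) v‖ := by
        apply Finset.sum_congr rfl
        intro v _
        rw [norm_mul, RCLike.norm_conj]
    _ ≤ ∑ v, ∑ u, (∑ e ∈ Finset.univ.filter (fun e => o e = v ∧ t e = u), w e)
          * (‖x v‖ * ‖x u‖) := by
        apply Finset.sum_le_sum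
        intro v _
        have hmv : ‖D.mulVec (fun u => x u) v‖ ≤ ∑ u, ‖D v u‖ * ‖x u‖ := by
          rw [Matrix.mulVec, dotProduct]
          refine le_trans (norm_sum_le _ _) (Finset.sum_le_sum fun u _ => ?_)
          rw [norm_mul]
        calc ‖x v‖ * ‖D.mulVec (fun u => x u) v‖
            ≤ ‖x v‖ * ∑ u, ‖D v u‖ * ‖x u‖ :=
              mul_le_mul_of_nonneg_left hmv (norm_nonneg _)
          _ = ∑ u, ‖D v u‖ * (‖x v‖ * ‖x u‖) := by
              rw [Finset.mul_sum]
              apply Finset.sum_congr rfl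
              intro u _
              ring
          _ ≤ ∑ u, (∑ e ∈ Finset.univ.filter (fun e => o e = v ∧ t e = u), w e)
                * (‖x v‖ * ‖x u‖) := by
              apply Finset.sum_le_sum
              intro u _
              exact mul_le_mul_of_nonneg_right (hDnorm v u) (by positivity)
    _ = ∑ e, w e * (‖x (o e)‖ * ‖x (t e)‖) := by
        rw [← sum_over_pairs o t (fun e => w e * (‖x (o e)‖ * ‖x (t e)‖))]
        apply Finset.sum_congr rfl
        intro v _
        apply Finset.sum_congr rfl
        intro u _
        rw [Finset.sum_mul]
        apply Finset.sum_congr rfl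
        intro e he
        simp only [Finset.mem_filter, Finset.mem_univ, true_and] at he
        rw [he.1, he.2]
    _ ≤ ∑ e, w e * ((‖x (o e)‖ ^ 2 + ‖x (t e)‖ ^ 2) / 2) := by
        apply Finset.sum_le_sum
        intro e _
        refine mul_le_mul_of_nonneg_left ?_ (hw0 e)
        nlinarith [sq_nonneg (‖x (o e)‖ - ‖x (t e)‖)]
    _ = ∑ e, w e * ‖x (o e)‖ ^ 2 := by
        have hswap : ∑ e, w e * ‖x (t e)‖ ^ 2 = ∑ e, w e * ‖x (o e)‖ ^ 2 := by
          refine Finset.sum_bij' (fun e _ => inv e) (fun e _ => inv e) ?_ ?_ ?_ ?_ ?_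
          · intro e _; exact Finset.mem_univ _
          · intro e _; exact Finset.mem_univ _
          · intro e _; exact hinv e
          · intro e _; exact hinv e
          · intro e _
            rw [hwsym, ho]
        have hexp : ∑ e, w e * ((‖x (o e)‖ ^ 2 + ‖x (t e)‖ ^ 2) / 2)
            = (∑ e, w e * ‖x (o e)‖ ^ 2 + ∑ e, w e * ‖x (t e)‖ ^ 2) / 2 := by
          rw [← Finset.sum_add_distrib, Finset.sum_div]
          apply Finset.sum_congr rfl
          intro e _
          ring
        rw [hexp, hswap]
        ring
    _ = ∑ v, (∑ e ∈ Finset.univ.filter (fun e => o e = v), w e) * ‖x v‖ ^ 2 := by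
        rw [Finset.sum_congr rfl (fun v _ => Finset.sum_mul ..)]
        rw [← Finset.sum_fiberwise_of_maps_to (fun (e : E) _ => Finset.mem_univ (o e))
          (fun e => w e * ‖x (o e)‖ ^ 2)]
        apply Finset.sum_congr rfl
        intro v _
        apply Finset.sum_congr rfl
        intro e he
        simp only [Finset.mem_filter, Finset.mem_univ, true_and] at he
        rw [he]
    _ ≤ ∑ v, R * ‖x v‖ ^ 2 := by
        apply Finset.sum_le_sum
        intro v _
        exact mul_le_mul_of_nonneg_right (hR v) (by positivity)
    _ = R * ‖x‖ ^ 2 := by rw [← Finset.mul_sum, hxnormsq]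

end Ray

theorem band_length_variation_bound
    {d ν : ℕ} (hd : 1 ≤ d) (hν : 1 ≤ ν)
    {E : Type*} [Fintype E] [DecidableEq E]
    (o t : E → Fin ν) (inv : E → E)
    (hinv : ∀ e, inv (inv e) = e) (hfpf : ∀ e, inv e ≠ e)
    (ho : ∀ e, o (inv e) = t e) (ht : ∀ e, t (inv e) = o e)
    (τ : E → Fin d → ℤ) (hτ : ∀ e, τ (inv e) = - τ e)
    (α αo : E → ℝ) (hα : ∀ e, α (inv e) = - α e) (hαo : ∀ e, αo (inv e) = - αo e)
    (S : Finset E) (hS : ∀ e ∈ S, inv e ∉ S)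
    (hout : ∀ e, e ∉ S → inv e ∉ S → α e = 0 ∧ αo e = 0 ∧ τ e = 0)
    (Q : Fin ν → ℝ)
    -- eigenvalues of `H_α(θ)` with multiplicity, in increasing order
    (lam : (Fin d → ℝ) → Fin ν → ℝ)
    (hmono : ∀ θ, Monotone (lam θ))
    (hroots : ∀ θ, (fiberSch o t τ α Q θ).charpoly
      = ∏ n : Fin ν, (X - C ((lam θ n : ℝ) : ℂ)))
    -- eigenvalues of `H_{α°}(θ)` with multiplicity, in increasing order
    (lamo : (Fin d → ℝ) → Fin ν → ℝ)
    (hmonoo : ∀ θ, Monotone (lamo θ))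
    (hrootso : ∀ θ, (fiberSch o t τ αo Q θ).charpoly
      = ∏ n : Fin ν, (X - C ((lamo θ n : ℝ) : ℂ)))
    (Cst : ℝ)
    (hCst : Cst = 2 * Finset.univ.sup' ⟨⟨0, by omega⟩, Finset.mem_univ _⟩
      (fun u : Fin ν => ∑ e ∈ (S ∪ S.image inv).filter (fun e => o e = u),
        |Real.sin ((αo e - α e) / 2)|)) :
    ∀ n : Fin ν,
      |((⨆ θ : Fin d → ℝ, lamo θ n) - (⨅ θ : Fin d → ℝ, lamo θ n))
        - ((⨆ θ : Fin d → ℝ, lam θ n) - (⨅ θ : Fin d → ℝ, lam θ n))| ≤ 2 * Cst := by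
  classical
  intro n
  -- Hermitian structure
  have hHa : ∀ θ : Fin d → ℝ, (fiberSch o t τ α Q θ).IsHermitian :=
    fun θ => fiberSch_isHermitian o t inv hinv ho ht τ hτ α hα Q θ
  have hHb : ∀ θ : Fin d → ℝ, (fiberSch o t τ αo Q θ).IsHermitian :=
    fun θ => fiberSch_isHermitian o t inv hinv ho ht τ hτ αo hαo Q θ
  have hnormI : ∀ r : ℝ, ‖Complex.exp (Complex.I * (r : ℝ))‖ = 1 := by
    intro r
    rw [mul_comm, Complex.norm_exp_ofReal_mul_I]
  -- the comparison weight
  set w : E → ℝ := fun e => 2 * |Real.sin ((αo e - α e) / 2)| with hwdef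
  have hw0 : ∀ e, 0 ≤ w e := fun e => by positivity
  have hwsym : ∀ e, w (inv e) = w e := by
    intro e
    simp only [hwdef]
    rw [hαo, hα, show (-αo e - -α e) = -(αo e - α e) by ring, neg_div, Real.sin_neg, abs_neg]
  have hwexp : ∀ (θ : Fin d → ℝ) (e : E),
      ‖Complex.exp (Complex.I * (edgePhase α τ θ e : ℝ))
        - Complex.exp (Complex.I * (edgePhase αo τ θ e : ℝ))‖ ≤ w e := by
    intro θ e
    rw [norm_exp_sub_exp]
    have hd : edgePhase α τ θ e - edgePhase αo τ θ e = -(αo e - α e) := by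
      unfold edgePhase; ring
    rw [hd, neg_div, Real.sin_neg, abs_neg]
  -- row sums bounded by Cst
  have hrow : ∀ v : Fin ν, ∑ e ∈ Finset.univ.filter (fun e => o e = v), w e ≤ Cst := by
    intro v
    have hmemS : ∀ e : E, e ∈ S.image inv ↔ inv e ∈ S := by
      intro e
      constructor
      · rintro he
        obtain ⟨a, ha, rfl⟩ := Finset.mem_image.mp he
        rwa [hinv]
      · intro he
        exact Finset.mem_image.mpr ⟨inv e, he, hinv e⟩
    have hsum : ∑ e ∈ Finset.univ.filter (fun e => o e = v), w e
        = ∑ e ∈ (S ∪ S.image inv).filter (fun e => o e = v), w e := by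
      symm
      apply Finset.sum_subset
      · exact Finset.filter_subset_filter _ (Finset.subset_univ _)
      · intro e he he2
        have heo : o e = v := (Finset.mem_filter.mp he).2
        have heS : e ∉ S ∪ S.image inv := by
          intro hc
          exact he2 (Finset.mem_filter.mpr ⟨hc, heo⟩)
        rw [Finset.mem_union] at heS
        push_neg at heS
        obtain ⟨ha0, hao0, _⟩ := hout e heS.1 (fun hc => heS.2 ((hmemS e).mpr hc))
        show w e = 0
        simp only [hwdef, hao0, ha0]
        norm_num
    rw [hsum, hCst]
    have hterm : (fun u : Fin ν => ∑ e ∈ (S ∪ S.image inv).filter (fun e => o e = u),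
        |Real.sin ((αo e - α e) / 2)|) v
        ≤ Finset.univ.sup' ⟨⟨0, by omega⟩, Finset.mem_univ _⟩
          (fun u : Fin ν => ∑ e ∈ (S ∪ S.image inv).filter (fun e => o e = u),
            |Real.sin ((αo e - α e) / 2)|) :=
      Finset.le_sup' (f := fun u : Fin ν => ∑ e ∈ (S ∪ S.image inv).filter (fun e => o e = u),
        |Real.sin ((αo e - α e) / 2)|) (Finset.mem_univ v)
    have hval : ∑ e ∈ (S ∪ S.image inv).filter (fun e => o e = v), w e
        = 2 * ∑ e ∈ (S ∪ S.image inv).filter (fun e => o e = v),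
            |Real.sin ((αo e - α e) / 2)| := by
      simp only [hwdef]
      rw [Finset.mul_sum]
    rw [hval]
    simp only at hterm
    linarith
  -- pointwise Weyl bound with constant Cst
  have hpoint : ∀ θ : Fin d → ℝ, |lamo θ n - lam θ n| ≤ Cst := by
    intro θ
    refine weyl_abs (hHa θ) (hHb θ) (hmono θ) (hmonoo θ) (hroots θ) (hrootso θ) ?_ n
    intro x
    exact rayleigh_diff_bound o t τ α αo Q θ θ inv hinv ho w (hwexp θ) hw0 hwsym Cst hrow x
  -- uniform boundedness
  set K : ℝ := 2 * (Fintype.card E : ℝ) with hKdef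
  have hrow2 : ∀ v : Fin ν, ∑ e ∈ Finset.univ.filter (fun e => o e = v), (2 : ℝ) ≤ K := by
    intro v
    rw [Finset.sum_const, hKdef]
    have := Finset.card_filter_le (Finset.univ : Finset E) (fun e => o e = v)
    rw [Finset.card_univ] at this
    have h2 : ((Finset.univ.filter (fun e => o e = v)).card : ℝ) ≤ (Fintype.card E : ℝ) := by
      exact_mod_cast this
    rw [nsmul_eq_mul]
    linarith
  have hbdgen : ∀ (β : E → ℝ), (∀ e, β (inv e) = - β e) →
      ∀ (lamb : (Fin d → ℝ) → Fin ν → ℝ), (∀ θ, Monotone (lamb θ)) →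
      (∀ θ, (fiberSch o t τ β Q θ).charpoly = ∏ m : Fin ν, (X - C ((lamb θ m : ℝ) : ℂ))) →
      ∀ θ : Fin d → ℝ, |lamb θ n - lamb (fun _ => 0) n| ≤ K := by
    intro β hβ lamb hmb hrb θ
    have hH := fun θ' => fiberSch_isHermitian o t inv hinv ho ht τ hτ β hβ Q θ'
    refine weyl_abs (hH (fun _ => 0)) (hH θ) (hmb _) (hmb _) (hrb _) (hrb _) ?_ n
    intro x
    refine rayleigh_diff_bound o t τ β β Q (fun _ => 0) θ inv hinv ho (fun _ => (2:ℝ)) ?_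
      (fun _ => by norm_num) (fun _ => rfl) K hrow2 x
    intro e
    calc ‖Complex.exp (Complex.I * (edgePhase β τ (fun _ => 0) e : ℝ))
        - Complex.exp (Complex.I * (edgePhase β τ θ e : ℝ))‖
        ≤ ‖Complex.exp (Complex.I * (edgePhase β τ (fun _ => 0) e : ℝ))‖
          + ‖Complex.exp (Complex.I * (edgePhase β τ θ e : ℝ))‖ := norm_sub_le _ _
      _ = 2 := by rw [hnormI, hnormI]; norm_num
  have hbdA := hbdgen α hα lam hmono hroots
  have hbdB := hbdgen αo hαo lamo hmonoo hrootso
  -- boundedness of the ranges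
  have hbddAa : BddAbove (Set.range fun θ => lam θ n) := by
    refine ⟨lam (fun _ => 0) n + K, ?_⟩
    rintro y ⟨θ, rfl⟩
    have := (abs_le.mp (hbdA θ)).2
    linarith
  have hbddAb : BddBelow (Set.range fun θ => lam θ n) := by
    refine ⟨lam (fun _ => 0) n - K, ?_⟩
    rintro y ⟨θ, rfl⟩
    have := (abs_le.mp (hbdA θ)).1
    linarith
  have hbddBa : BddAbove (Set.range fun θ => lamo θ n) := by
    refine ⟨lamo (fun _ => 0) n + K, ?_⟩
    rintro y ⟨θ, rfl⟩
    have := (abs_le.mp (hbdB θ)).2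
    linarith
  have hbddBb : BddBelow (Set.range fun θ => lamo θ n) := by
    refine ⟨lamo (fun _ => 0) n - K, ?_⟩
    rintro y ⟨θ, rfl⟩
    have := (abs_le.mp (hbdB θ)).1
    linarith
  -- the four inequalities between band edges
  have h1 : (⨆ θ : Fin d → ℝ, lamo θ n) ≤ (⨆ θ : Fin d → ℝ, lam θ n) + Cst := by
    apply ciSup_le
    intro θ
    have ha := (abs_le.mp (hpoint θ)).2
    have hb := le_ciSup hbddAa θ
    linarith
  have h2 : (⨆ θ : Fin d → ℝ, lam θ n) ≤ (⨆ θ : Fin d → ℝ, lamo θ n) + Cst := by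
    apply ciSup_le
    intro θ
    have ha := (abs_le.mp (hpoint θ)).1
    have hb := le_ciSup hbddBa θ
    linarith
  have h3 : (⨅ θ : Fin d → ℝ, lam θ n) - Cst ≤ (⨅ θ : Fin d → ℝ, lamo θ n) := by
    apply le_ciInf
    intro θ
    have ha := (abs_le.mp (hpoint θ)).1
    have hb := ciInf_le hbddAb θ
    linarith
  have h4 : (⨅ θ : Fin d → ℝ, lamo θ n) - Cst ≤ (⨅ θ : Fin d → ℝ, lam θ n) := by
    apply le_ciInf
    intro θ
    have ha := (abs_le.mp (hpoint θ)).2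
    have hb := ciInf_le hbddBb θ
    linarith
  rw [abs_le]
  constructor <;> linarith

end
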